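/- Let A ∈ ℝ^{m×n}, and let C and V be finite sets of vectors in ℝ^m with f_A(V) ≥ f_A(C). Let A′ be the matrix whose j-th column is A_j − Π_C A_j (each column of A with its orthogonal projection onto span(C) removed). Then f_{A′}(V) ≥ ( √(f_A(V)) − √(f_A(C)) )². -/

import Mathlib

open scoped RealInnerProductSpace

attribute [local instance] Classical.decEq

noncomputable def fVec {m : ℕ} (u : EuclideanSpace ℝ (Fin m))
    (S : Finset (EuclideanSpace ℝ (Fin m))) : ℝ :=
  ‖(Submodule.orthogonalProjectionOnto (Submodule.span ℝ (S : Set (EuclideanSpace ℝ (Fin m)))) u :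
      EuclideanSpace ℝ (Fin m))‖ ^ 2

noncomputable def fMat {m n : ℕ} (A : Fin n → EuclideanSpace ℝ (Fin m))
    (S : Finset (EuclideanSpace ℝ (Fin m))) : ℝ :=
  ∑ j, fVec (A j) S

noncomputable def sigmaMin {m : ℕ} (S : Finset (EuclideanSpace ℝ (Fin m))) : ℝ :=
  sInf {r : ℝ | ∃ α : S → ℝ, ∑ v, (α v) ^ 2 = 1 ∧
    r = ‖∑ v, α v • (v : EuclideanSpace ℝ (Fin m))‖ ^ 2}

noncomputable def sigmaMax {m : ℕ} (S : Finset (EuclideanSpace ℝ (Fin m))) : ℝ :=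
  sSup {r : ℝ | ∃ α : S → ℝ, ∑ v, (α v) ^ 2 = 1 ∧
    r = ‖∑ v, α v • (v : EuclideanSpace ℝ (Fin m))‖ ^ 2}

def IsGreedySeq {m nA nB : ℕ} (A : Fin nA → EuclideanSpace ℝ (Fin m))
    (B : Fin nB → EuclideanSpace ℝ (Fin m))
    (T : ℕ → Finset (EuclideanSpace ℝ (Fin m))) (b : ℕ → Fin nB) : Prop :=
  T 0 = ∅ ∧ ∀ i, T (i + 1) = insert (B (b i)) (T i) ∧
    ∀ j, fMat A (insert (B j) (T i)) ≤ fMat A (insert (B (b i)) (T i))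

set_option maxHeartbeats 1000000 in
/-- After subtracting from each column of A its projection onto span(C), the
set V still covers at least (√f_A(V) − √f_A(C))² of the residual matrix. -/
theorem residual_coverage {m n : ℕ}
    (A : Fin n → EuclideanSpace ℝ (Fin m))
    (C V : Finset (EuclideanSpace ℝ (Fin m)))
    (hVC : fMat A C ≤ fMat A V) :
    (Real.sqrt (fMat A V) - Real.sqrt (fMat A C)) ^ 2 ≤
      fMat (fun j => A j -
        (Submodule.orthogonalProjectionOnto
          (Submodule.span ℝ (C : Set (EuclideanSpace ℝ (Fin m)))) (A j) :
          EuclideanSpace ℝ (Fin m))) V := by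
  classical
  set Kc := Submodule.span ℝ (C : Set (EuclideanSpace ℝ (Fin m))) with hKc
  set Kv := Submodule.span ℝ (V : Set (EuclideanSpace ℝ (Fin m))) with hKv
  set x : Fin n → ℝ := fun j =>
    ‖(Submodule.orthogonalProjectionOnto Kv (A j - (Submodule.orthogonalProjectionOnto Kc (A j) : EuclideanSpace ℝ (Fin m))) :
      EuclideanSpace ℝ (Fin m))‖ with hx
  set y : Fin n → ℝ := fun j =>
    ‖(Submodule.orthogonalProjectionOnto Kc (A j) : EuclideanSpace ℝ (Fin m))‖ with hy
  set g : Fin n → ℝ := fun j =>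
    ‖(Submodule.orthogonalProjectionOnto Kv (A j) : EuclideanSpace ℝ (Fin m))‖ with hg
  have hPle : ∀ w : EuclideanSpace ℝ (Fin m),
      ‖(Submodule.orthogonalProjectionOnto Kv w : EuclideanSpace ℝ (Fin m))‖ ≤ ‖w‖ := by
    intro w
    calc ‖(Submodule.orthogonalProjectionOnto Kv w : EuclideanSpace ℝ (Fin m))‖
        = ‖Submodule.orthogonalProjectionOnto Kv w‖ := rfl
      _ ≤ ‖Submodule.orthogonalProjectionOnto Kv‖ * ‖w‖ := (Submodule.orthogonalProjectionOnto Kv).le_opNorm w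
      _ ≤ 1 * ‖w‖ := by
          have := Submodule.orthogonalProjectionOnto_norm_le Kv
          have h0 : (0:ℝ) ≤ ‖w‖ := norm_nonneg w
          nlinarith
      _ = ‖w‖ := one_mul _
  have hgxy : ∀ j, g j ≤ x j + y j := by
    intro j
    have hsplit : (Submodule.orthogonalProjectionOnto Kv (A j) : EuclideanSpace ℝ (Fin m)) =
        (Submodule.orthogonalProjectionOnto Kv (A j - (Submodule.orthogonalProjectionOnto Kc (A j) : EuclideanSpace ℝ (Fin m))) :
          EuclideanSpace ℝ (Fin m)) +
        (Submodule.orthogonalProjectionOnto Kv ((Submodule.orthogonalProjectionOnto Kc (A j) : EuclideanSpace ℝ (Fin m))) :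
          EuclideanSpace ℝ (Fin m)) := by
      rw [← Submodule.coe_add, ← map_add, sub_add_cancel]
    have h2 : g j ≤ x j +
        ‖(Submodule.orthogonalProjectionOnto Kv ((Submodule.orthogonalProjectionOnto Kc (A j) : EuclideanSpace ℝ (Fin m))) :
          EuclideanSpace ℝ (Fin m))‖ := by
      show ‖(Submodule.orthogonalProjectionOnto Kv (A j) : EuclideanSpace ℝ (Fin m))‖ ≤ _
      rw [hsplit]
      exact norm_add_le _ _
    have h3 := hPle ((Submodule.orthogonalProjectionOnto Kc (A j) : EuclideanSpace ℝ (Fin m)))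
    have h4 : ‖(Submodule.orthogonalProjectionOnto Kc (A j) : EuclideanSpace ℝ (Fin m))‖ = y j := rfl
    linarith [h4 ▸ h3, h2]
  have hmink : Real.sqrt (∑ j, (x j + y j) ^ 2) ≤
      Real.sqrt (∑ j, x j ^ 2) + Real.sqrt (∑ j, y j ^ 2) := by
    let u : EuclideanSpace ℝ (Fin n) := WithLp.toLp 2 (fun j => x j)
    let v : EuclideanSpace ℝ (Fin n) := WithLp.toLp 2 (fun j => y j)
    have htri := norm_add_le u v
    simp only [EuclideanSpace.norm_eq, Real.norm_eq_abs, sq_abs, u, v, WithLp.ofLp_add, WithLp.ofLp_toLp, Pi.add_apply] at htri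
    convert htri using 3
  have hfV : fMat A V = ∑ j, g j ^ 2 := rfl
  have hfC : fMat A C = ∑ j, y j ^ 2 := rfl
  have hfR : fMat (fun j => A j -
        (Submodule.orthogonalProjectionOnto Kc (A j) : EuclideanSpace ℝ (Fin m))) V = ∑ j, x j ^ 2 := rfl
  have h1 : Real.sqrt (∑ j, g j ^ 2) ≤ Real.sqrt (∑ j, (x j + y j) ^ 2) := by
    apply Real.sqrt_le_sqrt
    apply Finset.sum_le_sum
    intro j _
    have h5 := hgxy j
    have hg0 : (0:ℝ) ≤ g j := norm_nonneg _
    nlinarith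
  have key : Real.sqrt (fMat A V) ≤
      Real.sqrt (fMat (fun j => A j -
        (Submodule.orthogonalProjectionOnto Kc (A j) : EuclideanSpace ℝ (Fin m))) V) + Real.sqrt (fMat A C) := by
    rw [hfV, hfC, hfR]
    linarith [h1.trans hmink]
  have hR0 : (0:ℝ) ≤ fMat (fun j => A j -
        (Submodule.orthogonalProjectionOnto Kc (A j) : EuclideanSpace ℝ (Fin m))) V := by
    rw [hfR]; positivity
  have hba : Real.sqrt (fMat A C) ≤ Real.sqrt (fMat A V) := Real.sqrt_le_sqrt hVC
  have hsq := Real.sq_sqrt hR0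
  nlinarith [Real.sqrt_nonneg (fMat (fun j => A j -
        (Submodule.orthogonalProjectionOnto Kc (A j) : EuclideanSpace ℝ (Fin m))) V)]
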